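/- Let V ∈ ℝ^{N×M} with V^T V = I_M, H ∈ ℝ^{M×M}, and A = V H V^T. For k ≥ 1 and any scalar c, applying the entire function φ_k (with φ_k(z) = Σ_{i≥0} z^i/(k+i)!) to the matrix cA gives φ_k(cA) = (1/k!)(I_N − V V^T) + V φ_k(cH) V^T. -/

import Mathlib

open Matrix

noncomputable def phiMat {n : ℕ} (k : ℕ) (X : Matrix (Fin n) (Fin n) ℝ) :
    Matrix (Fin n) (Fin n) ℝ :=
  ∑' i : ℕ, ((Nat.factorial (k + i) : ℝ))⁻¹ • X ^ i

lemma entry_pow_le {n : ℕ} (X : Matrix (Fin n) (Fin n) ℝ) (i : ℕ) (a b : Fin n) :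
    |(X ^ i) a b| ≤ (max 1 (∑ p, ∑ q, |X p q|)) ^ i := by
  set C := max 1 (∑ p, ∑ q, |X p q|) with hC
  have hC1 : (1:ℝ) ≤ C := le_max_left _ _
  have hC0 : (0:ℝ) ≤ C := by linarith
  induction i generalizing a b with
  | zero =>
    simp [Matrix.one_apply]
    split <;> simp
  | succ i ih =>
    have hcol : ∑ j, |X j b| ≤ C := by
      calc ∑ j, |X j b| ≤ ∑ p, ∑ q, |X p q| := by
            apply Finset.sum_le_sum
            intro p _
            exact Finset.single_le_sum (f := fun q => |X p q|)
              (fun q _ => abs_nonneg _) (Finset.mem_univ b)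
        _ ≤ C := le_max_right _ _
    calc |(X ^ (i+1)) a b| = |∑ j, (X ^ i) a j * X j b| := by
          rw [pow_succ, Matrix.mul_apply]
      _ ≤ ∑ j, |(X ^ i) a j * X j b| := Finset.abs_sum_le_sum_abs _ _
      _ ≤ ∑ j, C ^ i * |X j b| := by
          apply Finset.sum_le_sum
          intro j _
          rw [abs_mul]
          exact mul_le_mul_of_nonneg_right (ih a j) (abs_nonneg _)
      _ = C ^ i * ∑ j, |X j b| := by rw [Finset.mul_sum]
      _ ≤ C ^ i * C := mul_le_mul_of_nonneg_left hcol (pow_nonneg hC0 i)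
      _ = C ^ (i+1) := by ring

lemma phi_summable {n : ℕ} (k : ℕ) (X : Matrix (Fin n) (Fin n) ℝ) :
    Summable (fun i : ℕ => ((Nat.factorial (k + i) : ℝ))⁻¹ • X ^ i) := by
  apply Pi.summable.mpr
  intro a
  rw [Pi.summable]
  intro b
  set C := max 1 (∑ p, ∑ q, |X p q|) with hC
  have hC0 : (0:ℝ) ≤ C := le_trans zero_le_one (le_max_left _ _)
  apply Summable.of_norm_bounded (g := fun i => C ^ i / (Nat.factorial i : ℝ))
    (Real.summable_pow_div_factorial C)
  intro i
  have h1 : ((Nat.factorial (k + i) : ℝ))⁻¹ ≤ ((Nat.factorial i : ℝ))⁻¹ := by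
    apply inv_anti₀
    · exact_mod_cast Nat.factorial_pos i
    · exact_mod_cast Nat.factorial_le (Nat.le_add_left i k)
  have h2 := entry_pow_le X i a b
  have hfact : (0:ℝ) ≤ ((Nat.factorial (k + i) : ℝ))⁻¹ := by positivity
  calc ‖((Nat.factorial (k + i) : ℝ))⁻¹ • (X ^ i) a b‖
      = ((Nat.factorial (k + i) : ℝ))⁻¹ * |(X ^ i) a b| := by
        rw [smul_eq_mul, norm_mul, Real.norm_eq_abs, Real.norm_eq_abs,
          abs_of_nonneg hfact]
    _ ≤ ((Nat.factorial i : ℝ))⁻¹ * C ^ i := by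
        exact mul_le_mul h1 h2 (abs_nonneg _) (by positivity)
    _ = C ^ i / (Nat.factorial i : ℝ) := by ring

theorem phi_of_approx_jacobian (N M : ℕ)
    (V : Matrix (Fin N) (Fin M) ℝ) (H : Matrix (Fin M) (Fin M) ℝ)
    (hV : Vᵀ * V = 1)
    (A : Matrix (Fin N) (Fin N) ℝ) (hA : A = V * H * Vᵀ)
    (k : ℕ) (hk : 1 ≤ k) (c : ℝ) :
    phiMat k (c • A) =
      ((Nat.factorial k : ℝ))⁻¹ • ((1 : Matrix (Fin N) (Fin N) ℝ) - V * Vᵀ) +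
        V * phiMat k (c • H) * Vᵀ := by
  set X := c • H with hX
  have hcA : c • A = V * X * Vᵀ := by
    rw [hA, hX, Matrix.mul_smul, Matrix.smul_mul]
  -- powers
  have hpow : ∀ i : ℕ, (V * X * Vᵀ) ^ (i + 1) = V * X ^ (i + 1) * Vᵀ := by
    intro i
    induction i with
    | zero => simp
    | succ i ih =>
      calc (V * X * Vᵀ) ^ (i + 2) = (V * X * Vᵀ) ^ (i + 1) * (V * X * Vᵀ) := by
            rw [pow_succ]
        _ = V * X ^ (i + 1) * (Vᵀ * V) * X * Vᵀ := by
            rw [ih]; simp only [Matrix.mul_assoc]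
        _ = V * X ^ (i + 2) * Vᵀ := by
            rw [hV, Matrix.mul_one, pow_succ, pow_succ]
            simp only [Matrix.mul_assoc, pow_succ]
  -- the continuous linear map X ↦ V * X * Vᵀ
  let L0 : Matrix (Fin M) (Fin M) ℝ →ₗ[ℝ] Matrix (Fin N) (Fin N) ℝ :=
    { toFun := fun Y => V * Y * Vᵀ
      map_add' := by intro Y Z; simp [Matrix.mul_add, Matrix.add_mul]
      map_smul' := by intro r Y; simp [Matrix.mul_smul, Matrix.smul_mul] }
  let L := L0.toContinuousLinearMap
  have hLdef : ∀ Y, L Y = V * Y * Vᵀ := fun Y => rfl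
  have hg : Summable (fun i : ℕ => ((Nat.factorial (k + i) : ℝ))⁻¹ • X ^ i) :=
    phi_summable k X
  have hg' : Summable (fun i : ℕ => ((Nat.factorial (k + (i+1)) : ℝ))⁻¹ • X ^ (i+1)) :=
    hg.comp_injective (add_left_injective 1)
  have hf : Summable (fun i : ℕ => ((Nat.factorial (k + i) : ℝ))⁻¹ • (c • A) ^ i) :=
    phi_summable k (c • A)
  have key : ∀ i : ℕ, ((Nat.factorial (k + (i+1)) : ℝ))⁻¹ • (c • A) ^ (i+1)
      = L (((Nat.factorial (k + (i+1)) : ℝ))⁻¹ • X ^ (i+1)) := by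
    intro i
    rw [hLdef, hcA, hpow i, Matrix.mul_smul, Matrix.smul_mul]
  have hphiA : phiMat k (c • A) =
      ((Nat.factorial k : ℝ))⁻¹ • (1 : Matrix (Fin N) (Fin N) ℝ) +
      ∑' i : ℕ, L (((Nat.factorial (k + (i+1)) : ℝ))⁻¹ • X ^ (i+1)) := by
    rw [phiMat, Summable.tsum_eq_zero_add hf]
    simp only [pow_zero, Nat.add_zero, key]
  have hphiH : phiMat k X =
      ((Nat.factorial k : ℝ))⁻¹ • (1 : Matrix (Fin M) (Fin M) ℝ) +
      ∑' i : ℕ, ((Nat.factorial (k + (i+1)) : ℝ))⁻¹ • X ^ (i+1) := by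
    rw [phiMat, Summable.tsum_eq_zero_add hg]
    simp
  have hLtsum : ∑' i : ℕ, L (((Nat.factorial (k + (i+1)) : ℝ))⁻¹ • X ^ (i+1))
      = L (∑' i : ℕ, ((Nat.factorial (k + (i+1)) : ℝ))⁻¹ • X ^ (i+1)) :=
    (L.map_tsum hg').symm
  rw [hphiA, hLtsum, hphiH, hLdef]
  rw [Matrix.mul_add, Matrix.add_mul, Matrix.mul_smul, Matrix.smul_mul,
    Matrix.mul_one, smul_sub]
  abel
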